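/- Let 𝕜 be a commutative ring, k ≥ 1, and R = 𝕜[x_1,…,x_k]/(x_1x_2⋯x_k). Let M be the R-module ⨁_I R/(x_I), where I runs over all nonempty subintervals [a,b] ⊆ [1,k]. Then the R-algebra B°° := End_R(M) is isomorphic, as an R-algebra, to its opposite algebra (B°°)^op. -/

import Mathlib

open MvPolynomial DirectSum

/-- The ring `R = 𝕜[x₁,…,x_k]/(x₁x₂⋯x_k)`, with variables indexed by `Fin k`. -/
abbrev NodalRing (𝕜 : Type*) [CommRing 𝕜] (k : ℕ) : Type _ :=
  MvPolynomial (Fin k) 𝕜 ⧸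
    Ideal.span {∏ i : Fin k, (X i : MvPolynomial (Fin k) 𝕜)}

/-- `x_I`: the image in `R` of the monomial `∏_{i ∈ I} x_i` (with `x_∅ = 1`). -/
noncomputable def xgen (𝕜 : Type*) [CommRing 𝕜] (k : ℕ) (I : Finset (Fin k)) :
    NodalRing 𝕜 k :=
  Ideal.Quotient.mk _ (∏ i ∈ I, X i)

/-- The index type of nonempty subintervals `[a,b] ⊆ [1,k]`, encoded as pairs
`a ≤ b` in `Fin k`. -/
abbrev IntervalIdx (k : ℕ) := {p : Fin k × Fin k // p.1 ≤ p.2}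

/-- The `R`-module `M = ⨁_I R/(x_I)`, where `I` runs over all nonempty
subintervals of `[1,k]`. -/
abbrev NodalM (𝕜 : Type*) [CommRing 𝕜] (k : ℕ) : Type _ :=
  DirectSum (IntervalIdx k) fun p =>
    NodalRing 𝕜 k ⧸ Ideal.span {xgen 𝕜 k (Finset.Icc p.1.1 p.1.2)}

namespace Stmt10Aux
set_option maxHeartbeats 1000000
set_option synthInstance.maxHeartbeats 1000000

variable {𝕜 : Type*} [CommRing 𝕜] {k : ℕ}

noncomputable instance instACGNodalM (𝕜 : Type*) [CommRing 𝕜] (k : ℕ) : AddCommGroup (NodalM 𝕜 k) :=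
  @DirectSum.instAddCommGroup (IntervalIdx k) (fun p : IntervalIdx k => NodalRing 𝕜 k ⧸ Ideal.span {xgen 𝕜 k (Finset.Icc p.1.1 p.1.2)}) (fun _ => inferInstance)

lemma X_mul_inj (i : Fin k) {f g : MvPolynomial (Fin k) 𝕜} (h : X i * f = X i * g) :
    f = g := by
  ext m
  rw [← coeff_X_mul m i f, h, coeff_X_mul]

lemma prodX_cancel (S : Finset (Fin k)) {f g : MvPolynomial (Fin k) 𝕜}
    (h : (∏ i ∈ S, X i) * f = (∏ i ∈ S, X i) * g) : f = g := by
  induction S using Finset.induction_on with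
  | empty => simpa using h
  | insert _ _ hx ih =>
      rename_i a s
      rw [Finset.prod_insert hx, mul_assoc, mul_assoc] at h
      exact ih (X_mul_inj a h)

lemma xgen_mul_compl (S : Finset (Fin k)) : xgen 𝕜 k S * xgen 𝕜 k Sᶜ = 0 := by
  rw [xgen, xgen, ← map_mul, Finset.prod_mul_prod_compl]
  exact Ideal.Quotient.eq_zero_iff_mem.2 (Ideal.subset_span (Set.mem_singleton _))

lemma ann (S : Finset (Fin k)) (r : NodalRing 𝕜 k) :
    xgen 𝕜 k S * r = 0 ↔ r ∈ Ideal.span {xgen 𝕜 k Sᶜ} := by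
  constructor
  · intro h
    obtain ⟨f, rfl⟩ := Ideal.Quotient.mk_surjective r
    rw [xgen, ← map_mul, Ideal.Quotient.eq_zero_iff_mem, Ideal.mem_span_singleton] at h
    obtain ⟨g, hg⟩ := h
    rw [← Finset.prod_mul_prod_compl S, mul_assoc] at hg
    have hf : f = (∏ i ∈ Sᶜ, X i) * g := prodX_cancel S hg
    rw [Ideal.mem_span_singleton]
    exact ⟨Ideal.Quotient.mk _ g, by rw [hf, xgen, map_mul]⟩
  · intro h
    rw [Ideal.mem_span_singleton] at h
    obtain ⟨c, rfl⟩ := h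
    rw [← mul_assoc, xgen_mul_compl, zero_mul]


section Pairing

variable (𝕜 k)

/-- The interval attached to an index. -/
abbrev Ip (p : IntervalIdx k) : Finset (Fin k) := Finset.Icc p.1.1 p.1.2

/-- The ideal `(x_I)`. -/
noncomputable abbrev Jp (p : IntervalIdx k) : Ideal (NodalRing 𝕜 k) :=
  Ideal.span {xgen 𝕜 k (Ip k p)}

/-- Multiplication by `x_{Iᶜ}`, descended to `R/(x_I) → R`. -/
noncomputable def qp (p : IntervalIdx k) :
    (NodalRing 𝕜 k ⧸ Jp 𝕜 k p) →ₗ[NodalRing 𝕜 k] NodalRing 𝕜 k :=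
  (Jp 𝕜 k p).liftQ (LinearMap.mul _ _ (xgen 𝕜 k (Ip k p)ᶜ)) (by
    rw [Ideal.span_le, Set.singleton_subset_iff, SetLike.mem_coe, LinearMap.mem_ker,
      LinearMap.mul_apply', mul_comm, xgen_mul_compl])

lemma qp_mk (p : IntervalIdx k) (f : NodalRing 𝕜 k) :
    qp 𝕜 k p (Submodule.Quotient.mk f) = xgen 𝕜 k (Ip k p)ᶜ * f := by
  rw [qp, Submodule.liftQ_apply, LinearMap.mul_apply']

lemma qp_inj (p : IntervalIdx k) (z : NodalRing 𝕜 k ⧸ Jp 𝕜 k p) (h : qp 𝕜 k p z = 0) :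
    z = 0 := by
  obtain ⟨f, rfl⟩ := Submodule.Quotient.mk_surjective _ z
  rw [qp_mk] at h
  rw [Submodule.Quotient.mk_eq_zero]
  have := (ann ((Ip k p)ᶜ) f).1 h
  rwa [compl_compl] at this

/-- The local pairing `R/(x_I) × R/(x_I) → R`, `(f,g) ↦ x_{Iᶜ} f g`. -/
noncomputable def Bp (p : IntervalIdx k) :
    (NodalRing 𝕜 k ⧸ Jp 𝕜 k p) →ₗ[NodalRing 𝕜 k]
      (NodalRing 𝕜 k ⧸ Jp 𝕜 k p) →ₗ[NodalRing 𝕜 k] NodalRing 𝕜 k :=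
  (Jp 𝕜 k p).liftQ (LinearMap.toSpanSingleton _ _ (qp 𝕜 k p)) (by
    rw [Ideal.span_le, Set.singleton_subset_iff, SetLike.mem_coe, LinearMap.mem_ker,
      LinearMap.toSpanSingleton_apply]
    apply LinearMap.ext
    intro z
    obtain ⟨g, rfl⟩ := Submodule.Quotient.mk_surjective _ z
    rw [LinearMap.smul_apply, qp_mk, LinearMap.zero_apply, smul_eq_mul, ← mul_assoc,
      xgen_mul_compl, zero_mul])

lemma Bp_mk (p : IntervalIdx k) (f g : NodalRing 𝕜 k) :
    Bp 𝕜 k p (Submodule.Quotient.mk f) (Submodule.Quotient.mk g)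
      = f * (xgen 𝕜 k (Ip k p)ᶜ * g) := by
  rw [Bp, Submodule.liftQ_apply, LinearMap.toSpanSingleton_apply, LinearMap.smul_apply,
    qp_mk, smul_eq_mul]

lemma Bp_symm (p : IntervalIdx k) (x y : NodalRing 𝕜 k ⧸ Jp 𝕜 k p) :
    Bp 𝕜 k p x y = Bp 𝕜 k p y x := by
  obtain ⟨f, rfl⟩ := Submodule.Quotient.mk_surjective _ x
  obtain ⟨g, rfl⟩ := Submodule.Quotient.mk_surjective _ y
  rw [Bp_mk, Bp_mk]; ring

lemma Bp_one (p : IntervalIdx k) (z : NodalRing 𝕜 k ⧸ Jp 𝕜 k p) :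
    Bp 𝕜 k p (Submodule.Quotient.mk 1) z = qp 𝕜 k p z := by
  rw [Bp, Submodule.liftQ_apply, LinearMap.toSpanSingleton_apply, one_smul]

end Pairing

section Beta

variable (𝕜 : Type*) [CommRing 𝕜] (k : ℕ)

/-- the adjoint map `M → Hom(M, R)` of the global pairing -/
noncomputable def β :
    NodalM 𝕜 k →ₗ[NodalRing 𝕜 k] (NodalM 𝕜 k →ₗ[NodalRing 𝕜 k] NodalRing 𝕜 k) :=
  DirectSum.toModule _ _ _ fun p =>
    (LinearMap.lcomp _ _ ((DirectSum.component (NodalRing 𝕜 k) (IntervalIdx k) (fun p : IntervalIdx k => NodalRing 𝕜 k ⧸ Ideal.span {xgen 𝕜 k (Finset.Icc p.1.1 p.1.2)})) p)).comp (Bp 𝕜 k p)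

lemma β_lof_apply (p : IntervalIdx k) (x : NodalRing 𝕜 k ⧸ Jp 𝕜 k p) (m : NodalM 𝕜 k) :
    β 𝕜 k ((DirectSum.lof (NodalRing 𝕜 k) (IntervalIdx k) (fun p : IntervalIdx k => NodalRing 𝕜 k ⧸ Ideal.span {xgen 𝕜 k (Finset.Icc p.1.1 p.1.2)})) p x) m = Bp 𝕜 k p x ((DirectSum.component (NodalRing 𝕜 k) (IntervalIdx k) (fun p : IntervalIdx k => NodalRing 𝕜 k ⧸ Ideal.span {xgen 𝕜 k (Finset.Icc p.1.1 p.1.2)})) p m) := by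
  rw [β, DirectSum.toModule_lof]
  rfl

lemma β_lof_lof_self (p : IntervalIdx k) (x y : NodalRing 𝕜 k ⧸ Jp 𝕜 k p) :
    β 𝕜 k ((DirectSum.lof (NodalRing 𝕜 k) (IntervalIdx k) (fun p : IntervalIdx k => NodalRing 𝕜 k ⧸ Ideal.span {xgen 𝕜 k (Finset.Icc p.1.1 p.1.2)})) p x) ((DirectSum.lof (NodalRing 𝕜 k) (IntervalIdx k) (fun p : IntervalIdx k => NodalRing 𝕜 k ⧸ Ideal.span {xgen 𝕜 k (Finset.Icc p.1.1 p.1.2)})) p y) = Bp 𝕜 k p x y := by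
  rw [β_lof_apply, DirectSum.component.lof_self]

lemma β_lof_lof_ne {p q : IntervalIdx k} (h : q ≠ p)
    (x : NodalRing 𝕜 k ⧸ Jp 𝕜 k p) (y : NodalRing 𝕜 k ⧸ Jp 𝕜 k q) :
    β 𝕜 k ((DirectSum.lof (NodalRing 𝕜 k) (IntervalIdx k) (fun p : IntervalIdx k => NodalRing 𝕜 k ⧸ Ideal.span {xgen 𝕜 k (Finset.Icc p.1.1 p.1.2)})) p x) ((DirectSum.lof (NodalRing 𝕜 k) (IntervalIdx k) (fun p : IntervalIdx k => NodalRing 𝕜 k ⧸ Ideal.span {xgen 𝕜 k (Finset.Icc p.1.1 p.1.2)})) q y) = 0 := by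
  rw [β_lof_apply, DirectSum.component.of, dif_neg h, map_zero]

lemma β_symm (m m' : NodalM 𝕜 k) : β 𝕜 k m m' = β 𝕜 k m' m := by
  have h : (β 𝕜 k).flip = β 𝕜 k := by
    apply DirectSum.linearMap_ext
    intro i
    apply LinearMap.ext
    intro x
    apply DirectSum.linearMap_ext
    intro j
    apply LinearMap.ext
    intro y
    simp only [LinearMap.comp_apply, LinearMap.flip_apply]
    by_cases hji : j = i
    · subst hji
      rw [β_lof_lof_self, β_lof_lof_self, Bp_symm]
    · rw [β_lof_lof_ne 𝕜 k hji, β_lof_lof_ne 𝕜 k (Ne.symm hji)]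
  conv_rhs => rw [← h]
  rw [LinearMap.flip_apply]

lemma β_inj : Function.Injective (β 𝕜 k) := by
  intro a b hab
  have hz : β 𝕜 k (a - b) = 0 := by rw [map_sub, hab, sub_self]
  have hab' : a - b = 0 := by
    refine DFinsupp.ext fun i => ?_
    have h1 : Bp 𝕜 k i (Submodule.Quotient.mk 1) ((DirectSum.component (NodalRing 𝕜 k) (IntervalIdx k) (fun p : IntervalIdx k => NodalRing 𝕜 k ⧸ Ideal.span {xgen 𝕜 k (Finset.Icc p.1.1 p.1.2)})) i (a - b)) = 0 := by
      rw [← β_lof_apply, β_symm, hz, LinearMap.zero_apply]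
    rw [Bp_one] at h1
    exact qp_inj 𝕜 k i _ h1
  rw [← sub_eq_zero]
  exact hab'

lemma β_surj : Function.Surjective (β 𝕜 k) := by
  intro g
  have hc : ∀ p : IntervalIdx k, ∃ r : NodalRing 𝕜 k,
      g ((DirectSum.lof (NodalRing 𝕜 k) (IntervalIdx k) (fun p : IntervalIdx k => NodalRing 𝕜 k ⧸ Ideal.span {xgen 𝕜 k (Finset.Icc p.1.1 p.1.2)})) p (Submodule.Quotient.mk 1)) = xgen 𝕜 k (Ip k p)ᶜ * r := by
    intro p
    have h0 : xgen 𝕜 k (Ip k p) • (DirectSum.lof (NodalRing 𝕜 k) (IntervalIdx k) (fun p : IntervalIdx k => NodalRing 𝕜 k ⧸ Ideal.span {xgen 𝕜 k (Finset.Icc p.1.1 p.1.2)})) p (Submodule.Quotient.mk (1 : NodalRing 𝕜 k))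
        = (0 : NodalM 𝕜 k) := by
      rw [← map_smul]
      have h00 : xgen 𝕜 k (Ip k p) • (Submodule.Quotient.mk (1 : NodalRing 𝕜 k) :
          NodalRing 𝕜 k ⧸ Jp 𝕜 k p) = 0 := by
        rw [← Submodule.Quotient.mk_smul, smul_eq_mul, mul_one, Submodule.Quotient.mk_eq_zero]
        exact Ideal.subset_span (Set.mem_singleton _)
      rw [h00, map_zero]
    have h1 : xgen 𝕜 k (Ip k p) * g ((DirectSum.lof (NodalRing 𝕜 k) (IntervalIdx k) (fun p : IntervalIdx k => NodalRing 𝕜 k ⧸ Ideal.span {xgen 𝕜 k (Finset.Icc p.1.1 p.1.2)})) p (Submodule.Quotient.mk 1)) = 0 := by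
      rw [← smul_eq_mul, ← map_smul, h0, map_zero]
    have h2 := (ann (Ip k p) _).1 h1
    rw [Ideal.mem_span_singleton] at h2
    obtain ⟨c, hcc⟩ := h2
    exact ⟨c, hcc⟩
  choose r hr using hc
  refine ⟨∑ p : IntervalIdx k, (DirectSum.lof (NodalRing 𝕜 k) (IntervalIdx k) (fun p : IntervalIdx k => NodalRing 𝕜 k ⧸ Ideal.span {xgen 𝕜 k (Finset.Icc p.1.1 p.1.2)})) p (Submodule.Quotient.mk (r p)), ?_⟩
  apply DirectSum.linearMap_ext
  intro i
  apply Submodule.linearMap_qext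
  apply LinearMap.ext_ring
  simp only [LinearMap.comp_apply, Submodule.mkQ_apply, map_sum, LinearMap.sum_apply]
  rw [Finset.sum_eq_single i]
  · rw [β_lof_lof_self, Bp_mk, mul_one, mul_comm, hr]
  · intro p _ hp
    rw [β_lof_lof_ne 𝕜 k (Ne.symm hp)]
  · intro h
    exact absurd (Finset.mem_univ i) h

end Beta

section Final

variable (𝕜 : Type*) [CommRing 𝕜] (k : ℕ)

noncomputable def eqv :
    NodalM 𝕜 k ≃ₗ[NodalRing 𝕜 k] (NodalM 𝕜 k →ₗ[NodalRing 𝕜 k] NodalRing 𝕜 k) :=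
  LinearEquiv.ofBijective (β 𝕜 k) ⟨β_inj 𝕜 k, β_surj 𝕜 k⟩

/-- the adjoint of an endomorphism w.r.t. the pairing β -/
noncomputable def Φ (f : Module.End (NodalRing 𝕜 k) (NodalM 𝕜 k)) :
    Module.End (NodalRing 𝕜 k) (NodalM 𝕜 k) :=
  (eqv 𝕜 k).symm.toLinearMap.comp
    ((LinearMap.lcomp _ _ f).comp (eqv 𝕜 k).toLinearMap)

lemma key (f : Module.End (NodalRing 𝕜 k) (NodalM 𝕜 k)) (m m' : NodalM 𝕜 k) :
    β 𝕜 k (Φ 𝕜 k f m) m' = β 𝕜 k m (f m') := by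
  show (eqv 𝕜 k) ((eqv 𝕜 k).symm ((LinearMap.lcomp _ _ f) ((eqv 𝕜 k) m))) m'
      = β 𝕜 k m (f m')
  rw [LinearEquiv.apply_symm_apply]
  rfl

lemma βext {a b : NodalM 𝕜 k} (h : ∀ m', β 𝕜 k a m' = β 𝕜 k b m') : a = b :=
  β_inj 𝕜 k (LinearMap.ext h)

lemma phi_invol (f : Module.End (NodalRing 𝕜 k) (NodalM 𝕜 k)) :
    Φ 𝕜 k (Φ 𝕜 k f) = f := by
  refine LinearMap.ext fun m => βext 𝕜 k fun m' => ?_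
  rw [key, β_symm, key, β_symm]

lemma phi_mul (f g : Module.End (NodalRing 𝕜 k) (NodalM 𝕜 k)) :
    Φ 𝕜 k (f * g) = Φ 𝕜 k g * Φ 𝕜 k f := by
  refine LinearMap.ext fun m => βext 𝕜 k fun m' => ?_
  simp only [Module.End.mul_apply, key]

lemma phi_add (f g : Module.End (NodalRing 𝕜 k) (NodalM 𝕜 k)) :
    Φ 𝕜 k (f + g) = Φ 𝕜 k f + Φ 𝕜 k g := by
  refine LinearMap.ext fun m => βext 𝕜 k fun m' => ?_
  simp only [LinearMap.add_apply, key, map_add]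

lemma phi_algebraMap (r : NodalRing 𝕜 k) :
    Φ 𝕜 k (algebraMap (NodalRing 𝕜 k) (Module.End (NodalRing 𝕜 k) (NodalM 𝕜 k)) r)
      = algebraMap (NodalRing 𝕜 k) (Module.End (NodalRing 𝕜 k) (NodalM 𝕜 k)) r := by
  refine LinearMap.ext fun m => βext 𝕜 k fun m' => ?_
  simp only [key, Module.algebraMap_end_apply, map_smul, LinearMap.smul_apply]

/-- The anti-involution, packaged as an algebra isomorphism with the opposite. -/
noncomputable def iso :
    Module.End (NodalRing 𝕜 k) (NodalM 𝕜 k) ≃ₐ[NodalRing 𝕜 k]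
      (Module.End (NodalRing 𝕜 k) (NodalM 𝕜 k))ᵐᵒᵖ where
  toFun f := MulOpposite.op (Φ 𝕜 k f)
  invFun F := Φ 𝕜 k F.unop
  left_inv f := by simp only [MulOpposite.unop_op, phi_invol]
  right_inv F := by
    simp only [phi_invol, MulOpposite.op_unop]
  map_mul' f g := by
    show MulOpposite.op (Φ 𝕜 k (f * g)) = MulOpposite.op (Φ 𝕜 k f) * MulOpposite.op (Φ 𝕜 k g)
    rw [phi_mul, MulOpposite.op_mul]
  map_add' f g := by
    show MulOpposite.op (Φ 𝕜 k (f + g)) = MulOpposite.op (Φ 𝕜 k f) + MulOpposite.op (Φ 𝕜 k g)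
    rw [phi_add, MulOpposite.op_add]
  commutes' r := by
    show MulOpposite.op (Φ 𝕜 k (algebraMap _ _ r)) = _
    rw [phi_algebraMap, MulOpposite.algebraMap_apply]

end Final

end Stmt10Aux

/-- **The algebra `B°° = End_R(⨁_I R/(x_I))` is isomorphic to its opposite.** -/
theorem stmt_10 (𝕜 : Type*) [CommRing 𝕜] (k : ℕ) (hk : 1 ≤ k) :
    Nonempty
      (Module.End (NodalRing 𝕜 k) (NodalM 𝕜 k) ≃ₐ[NodalRing 𝕜 k]
        (Module.End (NodalRing 𝕜 k) (NodalM 𝕜 k))ᵐᵒᵖ) := by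
  exact ⟨Stmt10Aux.iso 𝕜 k⟩
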